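/- Let λ > 0 and x > 0. Then the limit as ε → ∞ of ∑_{k=1}^∞ e^{−kx} · (e^{−λ}/(1 − e^{−λ})) · ( e^{λ e^{−x}} · Γ(εk, λ e^{−x}) / Γ(εk) − 1 ) · e^{−λ} λ^{k−1}/(k−1)! equals (e^{−2λ}/(1 − e^{−λ})) · e^{λ e^{−x} − x} · ( e^{λ e^{−x}} − 1 ). -/

import Mathlib

open MeasureTheory ProbabilityTheory Real Filter

/-- Modified Bessel function of the first kind of order 0, via its power series. -/
noncomputable def besselI0 (z : ℝ) : ℝ :=
  ∑' k : ℕ, (z / 2) ^ (2 * k) / ((Nat.factorial k : ℝ)) ^ 2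

/-- Modified Bessel function of the first kind of order 1, via its power series. -/
noncomputable def besselI1 (z : ℝ) : ℝ :=
  (z / 2) * ∑' k : ℕ, (z / 2) ^ (2 * k) / ((Nat.factorial k : ℝ) * (Nat.factorial (k + 1) : ℝ))

/-- Probability mass function of the zero-truncated Poisson distribution ZTP(λ). -/
noncomputable def ztpPmf (lam : ℝ) (k : ℕ) : ℝ :=
  if k = 0 then 0
  else Real.exp (-lam) * lam ^ k / ((1 - Real.exp (-lam)) * (Nat.factorial k : ℝ))

/-- Probability mass function of the size-biased distribution associated with ZTP(λ). -/
noncomputable def sizeBiasedPmf (lam : ℝ) (k : ℕ) : ℝ :=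
  if k = 0 then 0
  else Real.exp (-lam) * lam ^ (k - 1) / (Nat.factorial (k - 1) : ℝ)

/-- Laplace transform of the ZTP(λ) distribution. -/
noncomputable def ztpLaplace (lam x : ℝ) : ℝ :=
  (Real.exp (-lam) / (1 - Real.exp (-lam))) * (Real.exp (lam * Real.exp (-x)) - 1)

/-- Upper incomplete gamma function Γ(s, a) = ∫_a^∞ t^{s−1} e^{−t} dt. -/
noncomputable def upperGamma (s a : ℝ) : ℝ :=
  ∫ t in Set.Ioi a, t ^ (s - 1) * Real.exp (-t)

section Aux

open Set

lemma aux_integrableOn_Ioi {s a : ℝ} (hs : 0 < s) (ha : 0 < a) :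
    IntegrableOn (fun t : ℝ => t ^ (s - 1) * Real.exp (-t)) (Set.Ioi a) := by
  have h := Real.GammaIntegral_convergent hs
  have h2 : IntegrableOn (fun t : ℝ => Real.exp (-t) * t ^ (s - 1)) (Set.Ioi a) :=
    h.mono_set (Set.Ioi_subset_Ioi ha.le)
  exact h2.congr_fun (fun t _ => mul_comm _ _) measurableSet_Ioi

lemma aux_integrableOn_Ioc {s a : ℝ} (hs : 0 < s) (ha : 0 < a) :
    IntegrableOn (fun t : ℝ => t ^ (s - 1) * Real.exp (-t)) (Set.Ioc 0 a) := by
  have h := Real.GammaIntegral_convergent hs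
  have h2 : IntegrableOn (fun t : ℝ => Real.exp (-t) * t ^ (s - 1)) (Set.Ioc 0 a) :=
    h.mono_set Set.Ioc_subset_Ioi_self
  exact h2.congr_fun (fun t _ => mul_comm _ _) measurableSet_Ioc

lemma aux_Gamma_eq {s : ℝ} (hs : 0 < s) :
    Real.Gamma s = ∫ t in Set.Ioi (0 : ℝ), t ^ (s - 1) * Real.exp (-t) := by
  rw [Real.Gamma_eq_integral hs]
  exact setIntegral_congr_fun measurableSet_Ioi fun t _ => mul_comm _ _

lemma aux_upperGamma_nonneg {s a : ℝ} (ha : 0 < a) : 0 ≤ upperGamma s a := by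
  refine setIntegral_nonneg measurableSet_Ioi fun t ht => ?_
  have ht0 : 0 < t := ha.trans ht
  positivity

lemma aux_split {s a : ℝ} (hs : 0 < s) (ha : 0 < a) :
    Real.Gamma s =
      (∫ t in Set.Ioc (0 : ℝ) a, t ^ (s - 1) * Real.exp (-t)) + upperGamma s a := by
  rw [aux_Gamma_eq hs, upperGamma, ← setIntegral_union
    (Set.Ioc_disjoint_Ioi le_rfl) measurableSet_Ioi
    (aux_integrableOn_Ioc hs ha) (aux_integrableOn_Ioi hs ha),
    Set.Ioc_union_Ioi_eq_Ioi ha.le]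

lemma aux_lower_le {s a : ℝ} (hs : 1 ≤ s) (ha : 0 < a) :
    (∫ t in Set.Ioc (0 : ℝ) a, t ^ (s - 1) * Real.exp (-t)) ≤ a ^ s := by
  have hs0 : (0 : ℝ) < s := lt_of_lt_of_le one_pos hs
  have h1 : (∫ t in Set.Ioc (0 : ℝ) a, t ^ (s - 1) * Real.exp (-t)) ≤
      ∫ _t in Set.Ioc (0 : ℝ) a, a ^ (s - 1) := by
    refine setIntegral_mono_on (aux_integrableOn_Ioc hs0 ha)
      (integrableOn_const (by simp [Real.volume_Ioc]) (by simp)) measurableSet_Ioc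
      fun t ht => ?_
    have ht0 : 0 < t := ht.1
    calc t ^ (s - 1) * Real.exp (-t) ≤ t ^ (s - 1) * 1 := by
          gcongr
          exact Real.exp_le_one_iff.2 (by linarith)
      _ = t ^ (s - 1) := mul_one _
      _ ≤ a ^ (s - 1) := Real.rpow_le_rpow ht0.le ht.2 (by linarith)
  have h2 : (∫ _t in Set.Ioc (0 : ℝ) a, a ^ (s - 1)) = a ^ (s - 1) * a := by
    simp [Real.volume_Ioc, smul_eq_mul, mul_comm, ENNReal.toReal_ofReal ha.le, ha.le]
  calc (∫ t in Set.Ioc (0 : ℝ) a, t ^ (s - 1) * Real.exp (-t)) ≤ a ^ (s - 1) * a := by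
        rw [← h2]; exact h1
    _ = a ^ s := by
        rw [← Real.rpow_add_one ha.ne' (s - 1), show s - 1 + 1 = s by ring]

lemma aux_Gamma_lower {s c : ℝ} (hs : 1 ≤ s) (hc : 0 < c) :
    c ^ s * Real.exp (-(2 * c)) ≤ Real.Gamma s := by
  have hs0 : (0 : ℝ) < s := lt_of_lt_of_le one_pos hs
  have hIoi : IntegrableOn (fun t : ℝ => t ^ (s - 1) * Real.exp (-t)) (Set.Ioi 0) := by
    have h := Real.GammaIntegral_convergent hs0
    exact h.congr_fun (fun t _ => mul_comm _ _) measurableSet_Ioi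
  have hsub : (∫ t in Set.Ioc c (2 * c), t ^ (s - 1) * Real.exp (-t)) ≤
      ∫ t in Set.Ioi (0 : ℝ), t ^ (s - 1) * Real.exp (-t) := by
    refine setIntegral_mono_set hIoi ?_ ?_
    · filter_upwards [ae_restrict_mem measurableSet_Ioi] with t ht
      have : 0 < t := ht
      positivity
    · refine Filter.Eventually.of_forall fun t ht => ?_
      exact lt_of_lt_of_le hc ht.1.le
  have hconst : c ^ (s - 1) * Real.exp (-(2 * c)) * c ≤
      ∫ t in Set.Ioc c (2 * c), t ^ (s - 1) * Real.exp (-t) := by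
    have hvol : (volume (Set.Ioc c (2 * c))).toReal = c := by
      rw [Real.volume_Ioc]
      rw [ENNReal.toReal_ofReal (by linarith)]
      ring
    have := setIntegral_ge_of_const_le (μ := volume) (s := Set.Ioc c (2 * c))
      (c := c ^ (s - 1) * Real.exp (-(2 * c)))
      measurableSet_Ioc (by simp [Real.volume_Ioc])
      (fun t ht => by
        have h1 : c ^ (s - 1) ≤ t ^ (s - 1) :=
          Real.rpow_le_rpow hc.le ht.1.le (by linarith)
        have h2 : Real.exp (-(2 * c)) ≤ Real.exp (-t) :=
          Real.exp_le_exp.2 (by linarith [ht.2])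
        have ht0 : 0 < t := lt_of_lt_of_le hc ht.1.le
        calc c ^ (s - 1) * Real.exp (-(2 * c)) ≤ t ^ (s - 1) * Real.exp (-(2 * c)) := by
              gcongr
          _ ≤ t ^ (s - 1) * Real.exp (-t) := by
              have : Real.exp (-(2 * c)) ≤ Real.exp (-t) := h2
              have hnn : (0 : ℝ) ≤ t ^ (s - 1) := by positivity
              exact mul_le_mul_of_nonneg_left this hnn)
      (hIoi.mono_set (fun t ht => lt_of_lt_of_le hc ht.1.le))
    rw [show volume.real (Set.Ioc c (2 * c)) = c from hvol, smul_eq_mul, mul_comm] at this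
    exact this
  have key : c ^ s * Real.exp (-(2 * c)) ≤
      ∫ t in Set.Ioi (0 : ℝ), t ^ (s - 1) * Real.exp (-t) := by
    have hc' : c ^ s = c ^ (s - 1) * c := by
      rw [← Real.rpow_add_one hc.ne' (s - 1), show s - 1 + 1 = s by ring]
    rw [hc']
    exact le_trans (le_of_eq (by ring)) (le_trans hconst hsub)
  rwa [← aux_Gamma_eq hs0] at key

lemma aux_rpow_div_Gamma_tendsto {a : ℝ} (ha : 0 < a) :
    Filter.Tendsto (fun s => a ^ s / Real.Gamma s) Filter.atTop (nhds 0) := by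
  have hbase : Filter.Tendsto (fun s : ℝ => Real.exp (4 * a) * (1 / 2 : ℝ) ^ s)
      Filter.atTop (nhds 0) := by
    have := (tendsto_rpow_atTop_of_base_lt_one (1 / 2) (by norm_num) (by norm_num)).const_mul
      (Real.exp (4 * a))
    simpa using this
  refine tendsto_of_tendsto_of_tendsto_of_le_of_le' tendsto_const_nhds hbase ?_ ?_
  · filter_upwards [Filter.eventually_ge_atTop (1 : ℝ)] with s hs
    have := Real.Gamma_pos_of_pos (lt_of_lt_of_le one_pos hs)
    positivity
  · filter_upwards [Filter.eventually_ge_atTop (1 : ℝ)] with s hs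
    have hΓpos : 0 < Real.Gamma s := Real.Gamma_pos_of_pos (lt_of_lt_of_le one_pos hs)
    rw [div_le_iff₀ hΓpos]
    have hlow : (2 * a) ^ s * Real.exp (-(2 * (2 * a))) ≤ Real.Gamma s :=
      aux_Gamma_lower hs (by linarith)
    have hmul : (1 / 2 : ℝ) ^ s * (2 * a) ^ s = a ^ s := by
      rw [← Real.mul_rpow (by norm_num) (by linarith),
        show (1 / 2 : ℝ) * (2 * a) = a by ring]
    have hexp : Real.exp (4 * a) * Real.exp (-(2 * (2 * a))) = 1 := by
      rw [← Real.exp_add, show 4 * a + -(2 * (2 * a)) = 0 by ring, Real.exp_zero]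
    have hpos : (0 : ℝ) ≤ Real.exp (4 * a) * (1 / 2 : ℝ) ^ s := by positivity
    have h3 : a ^ s = Real.exp (4 * a) * (1 / 2 : ℝ) ^ s *
        ((2 * a) ^ s * Real.exp (-(2 * (2 * a)))) := by
      have : a ^ s = ((1 / 2 : ℝ) ^ s * (2 * a) ^ s) *
          (Real.exp (4 * a) * Real.exp (-(2 * (2 * a)))) := by
        rw [hmul, hexp, mul_one]
      rw [this]; ring
    rw [h3]
    exact mul_le_mul_of_nonneg_left hlow hpos

lemma aux_ratio_le_one {s a : ℝ} (hs : 0 < s) (ha : 0 < a) :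
    upperGamma s a ≤ Real.Gamma s := by
  rw [aux_split hs ha]
  have : 0 ≤ ∫ t in Set.Ioc (0 : ℝ) a, t ^ (s - 1) * Real.exp (-t) := by
    refine setIntegral_nonneg measurableSet_Ioc fun t ht => ?_
    have : 0 < t := ht.1
    positivity
  linarith

lemma aux_ratio_tendsto {a : ℝ} (ha : 0 < a) :
    Filter.Tendsto (fun s => upperGamma s a / Real.Gamma s) Filter.atTop (nhds 1) := by
  have h0 := aux_rpow_div_Gamma_tendsto ha
  have hone : Filter.Tendsto (fun s : ℝ => 1 - a ^ s / Real.Gamma s)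
      Filter.atTop (nhds 1) := by
    have := h0.const_sub 1
    simpa using this
  refine tendsto_of_tendsto_of_tendsto_of_le_of_le' hone tendsto_const_nhds ?_ ?_
  · filter_upwards [Filter.eventually_ge_atTop (1 : ℝ)] with s hs
    have hs0 : (0 : ℝ) < s := lt_of_lt_of_le one_pos hs
    have hΓ : 0 < Real.Gamma s := Real.Gamma_pos_of_pos hs0
    have hsplit := aux_split hs0 ha
    have hlow := aux_lower_le hs ha
    rw [sub_le_iff_le_add, ← add_div, le_div_iff₀ hΓ, one_mul]
    linarith
  · filter_upwards [Filter.eventually_ge_atTop (1 : ℝ)] with s hs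
    have hs0 : (0 : ℝ) < s := lt_of_lt_of_le one_pos hs
    have hΓ : 0 < Real.Gamma s := Real.Gamma_pos_of_pos hs0
    exact div_le_one_of_le₀ (aux_ratio_le_one hs0 ha) hΓ.le

end Aux

/-- As ε → ∞, E[e^{−xX*} H(x, εX*)] tends to
(e^{−2λ}/(1−e^{−λ})) e^{λe^{−x}−x} ( e^{λe^{−x}} − 1 ).
(The sum is written with the index shifted so that it runs over k ∈ ℕ,
the term of index k corresponding to the term k+1 of the original sum.) -/
theorem limit_eps_to_infty (lam x : ℝ) (hlam : 0 < lam) (hx : 0 < x) :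
    Filter.Tendsto
      (fun eps : ℝ =>
        ∑' k : ℕ, Real.exp (-(((k : ℝ) + 1) * x)) *
          ((Real.exp (-lam) / (1 - Real.exp (-lam))) *
            (Real.exp (lam * Real.exp (-x)) *
                upperGamma (eps * ((k : ℝ) + 1)) (lam * Real.exp (-x)) /
                Real.Gamma (eps * ((k : ℝ) + 1)) - 1)) *
          (Real.exp (-lam) * lam ^ k / (Nat.factorial k : ℝ)))
      Filter.atTop
      (nhds ((Real.exp (-2 * lam) / (1 - Real.exp (-lam))) *
        Real.exp (lam * Real.exp (-x) - x) * (Real.exp (lam * Real.exp (-x)) - 1))) := by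
  set a : ℝ := lam * Real.exp (-x) with ha_def
  have ha : 0 < a := by positivity
  have hden : 0 < 1 - Real.exp (-lam) := by
    have h1 : Real.exp (-lam) < 1 := by
      rw [Real.exp_lt_one_iff]; linarith
    linarith
  set C : ℝ := Real.exp (-lam) / (1 - Real.exp (-lam)) with hC_def
  have hC : 0 < C := div_pos (Real.exp_pos _) hden
  have hexpk : ∀ k : ℕ, Real.exp (-(((k : ℝ) + 1) * x)) =
      Real.exp (-x) * Real.exp (-x) ^ k := by
    intro k
    rw [← Real.exp_nat_mul, ← Real.exp_add]
    congr 1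
    ring
  set g : ℕ → ℝ := fun k => Real.exp (-(((k : ℝ) + 1) * x)) *
    (C * (Real.exp a - 1)) * (Real.exp (-lam) * lam ^ k / (Nat.factorial k : ℝ)) with hg
  set bound : ℕ → ℝ := fun k => Real.exp (-x) * (C * Real.exp a) * Real.exp (-lam) *
    (a ^ k / (Nat.factorial k : ℝ)) with hb
  have hsummable : Summable bound := (Real.summable_pow_div_factorial a).mul_left _
  have hab : ∀ k : ℕ, Filter.Tendsto (fun eps : ℝ =>
      Real.exp (-(((k : ℝ) + 1) * x)) *
        (C * (Real.exp a * upperGamma (eps * ((k : ℝ) + 1)) a /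
          Real.Gamma (eps * ((k : ℝ) + 1)) - 1)) *
        (Real.exp (-lam) * lam ^ k / (Nat.factorial k : ℝ)))
      Filter.atTop (nhds (g k)) := by
    intro k
    have hk1 : (0 : ℝ) < (k : ℝ) + 1 := by positivity
    have hscale : Filter.Tendsto (fun eps : ℝ => eps * ((k : ℝ) + 1))
        Filter.atTop Filter.atTop :=
      Filter.Tendsto.atTop_mul_const hk1 tendsto_id
    have hr : Filter.Tendsto (fun eps : ℝ =>
        upperGamma (eps * ((k : ℝ) + 1)) a / Real.Gamma (eps * ((k : ℝ) + 1)))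
        Filter.atTop (nhds 1) := (aux_ratio_tendsto ha).comp hscale
    have h1 := ((((hr.const_mul (Real.exp a)).sub_const 1).const_mul C).const_mul
        (Real.exp (-(((k : ℝ) + 1) * x)))).mul_const
        (Real.exp (-lam) * lam ^ k / (Nat.factorial k : ℝ))
    simpa [hg, mul_div_assoc] using h1
  have h_bound : ∀ᶠ eps : ℝ in Filter.atTop, ∀ k : ℕ,
      ‖Real.exp (-(((k : ℝ) + 1) * x)) *
        (C * (Real.exp a * upperGamma (eps * ((k : ℝ) + 1)) a /
          Real.Gamma (eps * ((k : ℝ) + 1)) - 1)) *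
        (Real.exp (-lam) * lam ^ k / (Nat.factorial k : ℝ))‖ ≤ bound k := by
    filter_upwards [Filter.eventually_ge_atTop (1 : ℝ)] with eps heps
    intro k
    have hk1 : (0 : ℝ) < (k : ℝ) + 1 := by positivity
    have hs : 0 < eps * ((k : ℝ) + 1) := by nlinarith
    have hΓ : 0 < Real.Gamma (eps * ((k : ℝ) + 1)) := Real.Gamma_pos_of_pos hs
    have hr0 : 0 ≤ upperGamma (eps * ((k : ℝ) + 1)) a / Real.Gamma (eps * ((k : ℝ) + 1)) :=
      div_nonneg (aux_upperGamma_nonneg ha) hΓ.le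
    have hr1 : upperGamma (eps * ((k : ℝ) + 1)) a / Real.Gamma (eps * ((k : ℝ) + 1)) ≤ 1 :=
      div_le_one_of_le₀ (aux_ratio_le_one hs ha) hΓ.le
    have hea : (1 : ℝ) ≤ Real.exp a := Real.one_le_exp ha.le
    have hbr : |Real.exp a * upperGamma (eps * ((k : ℝ) + 1)) a /
        Real.Gamma (eps * ((k : ℝ) + 1)) - 1| ≤ Real.exp a := by
      rw [mul_div_assoc, abs_le]
      constructor
      · nlinarith
      · nlinarith
    have hE2 : (0 : ℝ) ≤ Real.exp (-lam) * lam ^ k / (Nat.factorial k : ℝ) := by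
      positivity
    rw [Real.norm_eq_abs, abs_mul, abs_mul, abs_mul,
      abs_of_pos (Real.exp_pos _), abs_of_pos hC, abs_of_nonneg hE2]
    have hstep : Real.exp (-(((k : ℝ) + 1) * x)) *
        (C * |Real.exp a * upperGamma (eps * ((k : ℝ) + 1)) a /
          Real.Gamma (eps * ((k : ℝ) + 1)) - 1|) *
        (Real.exp (-lam) * lam ^ k / (Nat.factorial k : ℝ)) ≤
        Real.exp (-(((k : ℝ) + 1) * x)) * (C * Real.exp a) *
        (Real.exp (-lam) * lam ^ k / (Nat.factorial k : ℝ)) := by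
      gcongr
    refine hstep.trans (le_of_eq ?_)
    rw [hb]
    simp only
    rw [hexpk k, ha_def, mul_pow]
    ring
  have hmain := tendsto_tsum_of_dominated_convergence hsummable hab h_bound
  have hexp_tsum : ∑' k : ℕ, a ^ k / (Nat.factorial k : ℝ) = Real.exp a := by
    rw [Real.exp_eq_exp_ℝ, NormedSpace.exp_eq_tsum_div]
  have hgk : ∀ k : ℕ, g k =
      (Real.exp (-x) * (C * (Real.exp a - 1)) * Real.exp (-lam)) *
        (a ^ k / (Nat.factorial k : ℝ)) := by
    intro k
    rw [hg]
    simp only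
    rw [hexpk k, ha_def, mul_pow]
    ring
  have htsum : ∑' k : ℕ, g k =
      Real.exp (-2 * lam) / (1 - Real.exp (-lam)) * Real.exp (a - x) *
        (Real.exp a - 1) := by
    rw [tsum_congr hgk, tsum_mul_left, hexp_tsum, hC_def,
      show (-2 : ℝ) * lam = -lam + -lam by ring, Real.exp_add,
      show a - x = a + -x by ring, Real.exp_add]
    field_simp
  rw [← htsum]
  exact hmain
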